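/- Let {A_t : t ∈ T} be a proper tree of sets indexed by a tree T. Then the subspace {A_t : t ∈ T} ∪ {∅} of the Cantor cube P(A_0) = 2^{A_0} is homeomorphic to the one-point compactification A(T), with ∅ corresponding to ∞. -/

import Mathlib

open Filter Topology Set

universe u v

/-- A tree in the sense of the paper: a partial order with a minimal element `⊥`,
binary greatest lower bounds, and each set of predecessors `[0,t)` well ordered
(a linearly ordered, well-founded chain). -/
class TreeOrder (T : Type u) extends SemilatticeInf T, OrderBot T where
  chain_lt : ∀ t : T, IsChain (· ≤ ·) {x : T | x < t}
  isWF_lt : ∀ t : T, Set.IsWF {x : T | x < t}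

/-- The interval topology, generated by the intervals `(s,t]` (together with the
initial intervals `[0,t]`, which make the root an interior point of `[0,t]`). -/
def intervalTopology (T : Type u) [Preorder T] : TopologicalSpace T :=
  TopologicalSpace.generateFrom
    ({S : Set T | ∃ a b : T, S = Set.Ioc a b} ∪ {S : Set T | ∃ b : T, S = Set.Iic b})

instance TreeOrder.toTopologicalSpace (T : Type u) [TreeOrder T] : TopologicalSpace T :=
  intervalTopology T

section
variable {T : Type u} [TreeOrder T]

lemma TreeOrder.chain_Iic (m : T) : IsChain (· ≤ ·) (Iic m) := by
  intro s hs t ht hne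
  rcases eq_or_lt_of_le (hs : s ≤ m) with rfl | hs'
  · exact Or.inr ht
  rcases eq_or_lt_of_le (ht : t ≤ m) with rfl | ht'
  · exact Or.inl hs
  exact TreeOrder.chain_lt m hs' ht' hne

lemma TreeOrder.wf_lt : WellFounded (fun a b : T => a < b) := by
  have key : ∀ t : T, ∀ y : T, y < t → Acc (fun a b : T => a < b) y := by
    intro t
    have hwf := Set.wellFoundedOn_iff.mp (TreeOrder.isWF_lt (T := T) t)
    intro y
    induction y using hwf.induction with
    | _ x IH =>
      intro hx
      exact Acc.intro x fun z hz => IH z ⟨hz, lt_trans hz hx, hx⟩ (lt_trans hz hx)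
  exact ⟨fun t => Acc.intro t (key t)⟩

lemma TreeOrder.exists_isLUB {C : Set T} (hne : C.Nonempty) (hC : IsChain (· ≤ ·) C)
    (hb : BddAbove C) : ∃ m : T, IsLUB C m := by
  obtain ⟨u, hu⟩ := hb
  have hIic : Set.IsWF (Iic u) := by
    have : (Iic u : Set T) = {x | x < u} ∪ {u} := by
      ext x; simp [le_iff_lt_or_eq, or_comm]
    rw [this]
    exact (TreeOrder.isWF_lt u).union (Set.isWF_singleton)
  set UB : Set T := {v | v ≤ u ∧ ∀ c ∈ C, c ≤ v} with hUB
  have hUBsub : UB ⊆ Iic u := fun v hv => hv.1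
  have hUBwf : Set.IsWF UB := hIic.mono hUBsub
  have hUBne : UB.Nonempty := ⟨u, le_refl u, fun c hc => hu hc⟩
  set m := hUBwf.min hUBne with hm
  have hmUB : m ∈ UB := hUBwf.min_mem hUBne
  refine ⟨m, hmUB.2, ?_⟩
  intro v hv
  have hvm : v ⊓ m ∈ UB := ⟨le_trans inf_le_right hmUB.1, fun c hc => le_inf (hv hc) (hmUB.2 c hc)⟩
  have : ¬ (v ⊓ m) < m := hUBwf.not_lt_min hUBne hvm
  have : m ≤ v ⊓ m := by
    rcases lt_or_eq_of_le (inf_le_right : v ⊓ m ≤ m) with h | h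
    · exact absurd h this
    · exact h.ge
  exact le_trans this inf_le_left

lemma TreeOrder.isOpen_Iic' (b : T) : IsOpen (Iic b) :=
  TopologicalSpace.GenerateOpen.basic _ (Or.inr ⟨b, rfl⟩)

lemma TreeOrder.isOpen_Ioc' (a b : T) : IsOpen (Ioc a b) :=
  TopologicalSpace.GenerateOpen.basic _ (Or.inl ⟨a, b, rfl⟩)

lemma TreeOrder.isClosed_Iic' (m : T) : IsClosed (Iic m) := by
  rw [← isOpen_compl_iff]
  have : (Iic m)ᶜ = ⋃ t ∈ (Iic m)ᶜ, Ioc (t ⊓ m) t := by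
    ext s
    constructor
    · intro hs
      refine Set.mem_biUnion hs ⟨?_, le_refl s⟩
      rcases lt_or_eq_of_le (inf_le_left : s ⊓ m ≤ s) with h | h
      · exact h
      · exact absurd (h ▸ inf_le_right : s ≤ m) hs
    · intro hs
      obtain ⟨t, ht, hst⟩ := Set.mem_iUnion₂.mp hs
      intro hsm
      exact absurd (le_inf hst.2 hsm) (not_le_of_gt hst.1)
  rw [this]
  exact isOpen_biUnion fun t _ => TreeOrder.isOpen_Ioc' _ _

lemma TreeOrder.nbhd {U : Set T} (hU : IsOpen U) :
    ∀ m ∈ U, (∃ a, a < m ∧ Ioc a m ⊆ U) ∨ Iic m ⊆ U := by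
  have hU' : TopologicalSpace.GenerateOpen
      ({S : Set T | ∃ a b : T, S = Set.Ioc a b} ∪ {S : Set T | ∃ b : T, S = Set.Iic b}) U := hU
  clear hU
  induction hU' with
  | basic S hS =>
    intro m hm
    rcases hS with ⟨a, b, rfl⟩ | ⟨b, rfl⟩
    · exact Or.inl ⟨a, hm.1, fun t ht => ⟨ht.1, le_trans ht.2 hm.2⟩⟩
    · exact Or.inr fun t ht => le_trans ht hm
  | univ => exact fun m _ => Or.inr fun t _ => trivial
  | inter U V hUo hVo ihU ihV =>
    intro m hm
    rcases ihU m hm.1 with ⟨a, ha, hsa⟩ | hU1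
    · rcases ihV m hm.2 with ⟨a', ha', hsa'⟩ | hV1
      · by_cases hae : a = a'
        · exact Or.inl ⟨a, ha, fun t ht => ⟨hsa ht, hsa' ⟨hae ▸ ht.1, ht.2⟩⟩⟩
        · rcases TreeOrder.chain_Iic m (le_of_lt ha) (le_of_lt ha') hae with h | h
          · exact Or.inl ⟨a', ha', fun t ht => ⟨hsa ⟨lt_of_le_of_lt h ht.1, ht.2⟩, hsa' ht⟩⟩
          · exact Or.inl ⟨a, ha, fun t ht => ⟨hsa ht, hsa' ⟨lt_of_le_of_lt h ht.1, ht.2⟩⟩⟩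
      · exact Or.inl ⟨a, ha, fun t ht => ⟨hsa ht, hV1 ht.2⟩⟩
    · rcases ihV m hm.2 with ⟨a', ha', hsa'⟩ | hV1
      · exact Or.inl ⟨a', ha', fun t ht => ⟨hU1 ht.2, hsa' ht⟩⟩
      · exact Or.inr fun t ht => ⟨hU1 ht, hV1 ht⟩
  | sUnion S hS ih =>
    intro m hm
    obtain ⟨U0, hU0, hmU0⟩ := hm
    rcases ih U0 hU0 m hmU0 with ⟨a, ha, hsa⟩ | h1
    · exact Or.inl ⟨a, ha, fun t ht => ⟨U0, hU0, hsa ht⟩⟩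
    · exact Or.inr fun t ht => ⟨U0, hU0, h1 ht⟩

lemma TreeOrder.isCompact_Iic' (m : T) : IsCompact (Iic m) := by
  refine TreeOrder.wf_lt.induction (C := fun m => IsCompact (Iic m)) m ?_
  clear m
  intro m IH
  rw [isCompact_iff_finite_subcover]
  intro ι U hUo hcov
  classical
    obtain ⟨i0, hi0⟩ : ∃ i, m ∈ U i := by
      simpa using hcov (le_refl m)
    rcases TreeOrder.nbhd (hUo i0) m hi0 with ⟨a, ha, hsa⟩ | h1
    · have hsub : Iic m \ U i0 ⊆ Iic a := by
        intro t ⟨htm, htU⟩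
        by_contra hta
        refine htU (hsa ⟨?_, htm⟩)
        rcases TreeOrder.chain_Iic m (le_of_lt ha) (htm : t ≤ m)
          (fun h => hta (h ▸ le_refl a)) with h | h
        · exact lt_of_le_of_ne h (fun h' => hta (h' ▸ le_refl t))
        · exact absurd h hta
      obtain ⟨s, hs⟩ := (isCompact_iff_finite_subcover.mp (IH a ha)) U hUo
        (le_trans (Iic_subset_Iic.mpr (le_of_lt ha)) hcov)
      refine ⟨insert i0 s, fun t htm => ?_⟩
      by_cases htU : t ∈ U i0
      · exact Set.mem_biUnion (Finset.mem_insert_self i0 s) htU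
      · obtain ⟨i, hi, hti⟩ := Set.mem_iUnion₂.mp (hs (hsub ⟨htm, htU⟩))
        exact Set.mem_biUnion (Finset.mem_insert_of_mem hi) hti
    · exact ⟨{i0}, fun t htm => Set.mem_biUnion (Finset.mem_singleton_self i0) (h1 htm)⟩

end

/-- A tree of sets indexed by a tree `T`. -/
structure IsTreeOfSets {T : Type u} [PartialOrder T] {X : Type v} (A : T → Set X) : Prop where
  subset_of_le : ∀ s t : T, t ≤ s → A s ⊆ A t
  disjoint_of_incomp : ∀ s t : T, ¬ s ≤ t → ¬ t ≤ s → A s ∩ A t = ∅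
  iInter_chain : ∀ C : Set T, C.Nonempty → IsChain (· ≤ ·) C → ∀ t : T, IsLUB C t →
    ⋂ s ∈ C, A s = A t
  iInter_unbounded : ∀ C : Set T, C.Nonempty → IsChain (· ≤ ·) C → ¬ BddAbove C →
    ⋂ s ∈ C, A s = ∅

/-- A proper tree of sets: all members are nonempty and pairwise distinct. -/
def IsProperTreeOfSets {T : Type u} [PartialOrder T] {X : Type v} (A : T → Set X) : Prop :=
  IsTreeOfSets A ∧ (∀ t : T, (A t).Nonempty) ∧ Function.Injective A

/-- The characteristic function of `C`, as a point of the Cantor cube `2^B`. -/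
noncomputable def subChar {X : Type v} (B C : Set X) : ↥B → Bool :=
  fun x => @decide ((x : X) ∈ C) (Classical.propDecidable _)

section
variable {T : Type u} [TreeOrder T]

lemma exists_max_mem {X : Type v} {A : T → Set X} (hA : IsTreeOfSets A) {x : X}
    (hx : x ∈ A ⊥) : ∃ m : T, ∀ t : T, x ∈ A t ↔ t ≤ m := by
  set C : Set T := {t | x ∈ A t} with hCdef
  have hne : C.Nonempty := ⟨⊥, hx⟩
  have hchain : IsChain (· ≤ ·) C := by
    intro s hs t ht _
    by_contra h
    push_neg at h
    have := hA.disjoint_of_incomp s t h.1 h.2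
    exact absurd (this ▸ (⟨hs, ht⟩ : x ∈ A s ∩ A t)) (Set.notMem_empty x)
  have hbdd : BddAbove C := by
    by_contra h
    have := hA.iInter_unbounded C hne hchain h
    exact absurd (this ▸ Set.mem_iInter₂.mpr fun s hs => hs) (Set.notMem_empty x)
  obtain ⟨m, hm⟩ := TreeOrder.exists_isLUB hne hchain hbdd
  have hxm : x ∈ A m := by
    have := hA.iInter_chain C hne hchain m hm
    exact this ▸ Set.mem_iInter₂.mpr fun s hs => hs
  exact ⟨m, fun t => ⟨fun ht => hm.1 ht, fun ht => hA.subset_of_le m t ht hxm⟩⟩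

end

/-- For a proper tree of sets `{A_t : t ∈ T}`, the subspace `{A_t : t ∈ T} ∪ {∅}` of the
Cantor cube `2^{A_⊥}` is homeomorphic to the one-point compactification `A(T)`, with `∅`
corresponding to `∞`. -/
theorem homeomorph_onePoint_of_properTreeOfSets {T : Type u} [TreeOrder T] {X : Type v}
    (A : T → Set X) (hA : IsProperTreeOfSets A) :
    ∃ h : OnePoint T ≃ₜ
        ↥((Set.range fun t : T => subChar (A ⊥) (A t)) ∪ {fun _ => false}),
      (h OnePoint.infty).1 = fun _ => false := by
  obtain ⟨hT, hne, hinj⟩ := hA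
  set B : Set X := A ⊥ with hB
  set S : Set (↥B → Bool) := (Set.range fun t : T => subChar B (A t)) ∪ {fun _ => false} with hS
  have hsubB : ∀ t : T, A t ⊆ B := fun t => hT.subset_of_le t ⊥ bot_le
  -- the underlying function
  set f : OnePoint T → (↥B → Bool) :=
    fun o => Option.elim o (fun _ => false) (fun t => subChar B (A t)) with hf
  have hfmem : ∀ o, f o ∈ S := by
    rintro (_ | t)
    · exact Or.inr rfl
    · exact Or.inl ⟨t, rfl⟩
  have hchar_true : ∀ (t : T) (x : ↥B), subChar B (A t) x = true ↔ (x : X) ∈ A t := by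
    intro t x
    simp [subChar]
  -- injectivity facts
  have hne_false : ∀ t : T, subChar B (A t) ≠ fun _ => false := by
    intro t h
    obtain ⟨y, hy⟩ := hne t
    have hyB : y ∈ B := hsubB t hy
    have h2 : subChar B (A t) ⟨y, hyB⟩ = false := congrFun h ⟨y, hyB⟩
    rw [(hchar_true t ⟨y, hyB⟩).mpr hy] at h2
    exact Bool.noConfusion h2
  have hinj' : Function.Injective fun t : T => subChar B (A t) := by
    intro s t h
    refine hinj ?_
    ext y
    constructor
    · intro hy
      have h2 : subChar B (A s) ⟨y, hsubB s hy⟩ = subChar B (A t) ⟨y, hsubB s hy⟩ :=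
        congrFun h ⟨y, hsubB s hy⟩
      rw [(hchar_true s _).mpr hy] at h2
      exact (hchar_true t _).mp h2.symm
    · intro hy
      have h2 : subChar B (A s) ⟨y, hsubB t hy⟩ = subChar B (A t) ⟨y, hsubB t hy⟩ :=
        congrFun h ⟨y, hsubB t hy⟩
      rw [(hchar_true t _).mpr hy] at h2
      exact (hchar_true s _).mp h2
  have hbij : Function.Bijective fun o => (⟨f o, hfmem o⟩ : ↥S) := by
    constructor
    · rintro (_ | s) (_ | t) h
      · rfl
      · exact absurd congr(($h).1).symm (hne_false t)
      · exact absurd congr(($h).1) (hne_false s)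
      · exact congrArg _ (hinj' congr(($h).1))
    · rintro ⟨p, hp | hp⟩
      · obtain ⟨t, ht⟩ := hp
        exact ⟨OnePoint.some t, Subtype.ext ht⟩
      · exact ⟨OnePoint.infty, Subtype.ext hp.symm⟩
  set e : OnePoint T ≃ ↥S := Equiv.ofBijective _ hbij with he
  -- continuity
  have hcont : Continuous f := by
    apply continuous_pi
    intro x
    obtain ⟨m, hm⟩ := exists_max_mem hT x.2
    have hpre : ∀ b : Bool, (fun o => f o x) ⁻¹' {b} =
        if b then OnePoint.some '' Iic m else (OnePoint.some '' Iic m)ᶜ := by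
      intro b
      have key : ∀ o : OnePoint T, f o x = true ↔ o ∈ OnePoint.some '' Iic m := by
        rintro (_ | t)
        · simp only [hf]
          constructor
          · intro h; exact absurd h Bool.false_ne_true
          · rintro ⟨t, _, h⟩; exact absurd h (by exact fun h => by cases h)
        · simp only [hf]
          constructor
          · intro h
            exact ⟨t, (hm t).mp ((hchar_true t x).mp h), rfl⟩
          · rintro ⟨s, hs, hst⟩
            cases Option.some.inj hst
            exact (hchar_true t x).mpr ((hm t).mpr hs)
      cases b with
      | true => ext o; simpa using key o
      | false =>
        ext o
        simp only [Set.mem_preimage, Set.mem_singleton_iff, if_neg Bool.false_ne_true,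
          Set.mem_compl_iff]
        rw [← key o]
        cases h : f o x <;> simp
    rw [continuous_discrete_rng]
    intro b
    rw [hpre b]
    cases b with
    | true =>
      simpa using OnePoint.isOpen_image_coe.mpr (TreeOrder.isOpen_Iic' m)
    | false =>
      simpa using OnePoint.isOpen_compl_image_coe.mpr
        ⟨TreeOrder.isClosed_Iic' m, TreeOrder.isCompact_Iic' m⟩
  have hconte : Continuous (e : OnePoint T → ↥S) := by
    exact Continuous.subtype_mk hcont _
  exact ⟨hconte.homeoOfEquivCompactToT2 (f := e), rfl⟩
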